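/- Converse via Fano: let {Ψ_n} be a sequence of codes for computing A⊕B over a two-sender memoryless classical MAC W(y|x_A,x_B), with messages M_{A,n}, M_{B,n} independent uniform on message sets of size ⌈2^{nR}⌉, encoders to X_A^n, X_B^n, and a decoder whose error probability for recovering M_{A,n} ⊕ M_{B,n} tends to 0. Then R ≤ max_{P_B, a} I(B; Y | A = a), where the maximum is over input distributions P_B and fixed symbols a. -/

import Mathlib

/-- Mutual information (base 2) of a joint distribution on a product of finite types. -/
noncomputable def mutInfo {X Y : Type*} [Fintype X] [Fintype Y] (μ : X → Y → ℝ) : ℝ :=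
  ∑ x, ∑ y, if μ x y = 0 then 0 else
    μ x y * Real.logb 2 (μ x y / ((∑ y', μ x y') * (∑ x', μ x' y)))


open Finset Real

/-- Gibbs' inequality. -/
lemma gibbs {α : Type*} [Fintype α] {P q : α → ℝ} (hP0 : ∀ a, 0 ≤ P a)
    (hq0 : ∀ a, 0 ≤ q a) (hP1 : ∑ a, P a = 1) (hq1 : ∑ a, q a ≤ 1)
    (habs : ∀ a, q a = 0 → P a = 0) :
    ∑ a, P a * Real.log (q a) ≤ ∑ a, P a * Real.log (P a) := by
  have key : ∀ a, P a * Real.log (q a) - P a * Real.log (P a) ≤ q a - P a := by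
    intro a
    rcases eq_or_lt_of_le (hP0 a) with h | h
    · simp [← h, hq0 a]
    · have hq : 0 < q a := by
        rcases eq_or_lt_of_le (hq0 a) with h' | h'
        · exact absurd (habs a h'.symm) (by positivity)
        · exact h'
      have h1 : Real.log (q a) - Real.log (P a) = Real.log (q a / P a) :=
        (Real.log_div hq.ne' h.ne').symm
      have h2 : Real.log (q a / P a) ≤ q a / P a - 1 :=
        Real.log_le_sub_one_of_pos (div_pos hq h)
      calc P a * Real.log (q a) - P a * Real.log (P a)
          = P a * Real.log (q a / P a) := by rw [← h1]; ring
        _ ≤ P a * (q a / P a - 1) := by nlinarith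
        _ = q a - P a := by field_simp
  have h3 := Finset.sum_le_sum (s := (Finset.univ : Finset α)) (fun a _ => key a)
  rw [Finset.sum_sub_distrib, Finset.sum_sub_distrib, hP1] at h3
  linarith [hq1, h3]

/-- Grouping a sum along a map. -/
lemma sum_mul_comp {σ τ : Type*} [Fintype σ] [Fintype τ] [DecidableEq τ]
    (F : σ → ℝ) (pr : σ → τ) (h : τ → ℝ) :
    ∑ x, F x * h (pr x) = ∑ t, (∑ x, if pr x = t then F x else 0) * h t := by
  have : ∀ x, F x * h (pr x) = ∑ t, (if pr x = t then F x else 0) * h t := by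
    intro x
    simp only [ite_mul, zero_mul, Finset.sum_ite_eq, Finset.mem_univ, if_true]
  rw [Finset.sum_congr rfl (fun x _ => this x), Finset.sum_comm]
  exact Finset.sum_congr rfl (fun t _ => (Finset.sum_mul _ _ _).symm)

lemma sum_prod_fun {Y : Type*} [Fintype Y] [DecidableEq Y] {n : ℕ} (g : Fin n → Y → ℝ) :
    ∑ ys : Fin n → Y, ∏ i, g i (ys i) = ∏ i, ∑ y, g i y := by
  rw [← Finset.sum_prod_piFinset Finset.univ g, Fintype.piFinset_univ]

/-- Binary entropy bound. -/
lemma binEnt_le {e : ℝ} (h0 : 0 ≤ e) (h1 : e ≤ 1) :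
    -(e * Real.log e) - ((1 - e) * Real.log (1 - e)) ≤ Real.log 2 := by
  have := gibbs (α := Bool) (P := fun b => if b then e else 1 - e)
    (q := fun _ => 1/2) (by intro a; cases a <;> simp <;> linarith)
    (by intro a; norm_num) (by simp) (by norm_num) (by norm_num)
  simp [Fintype.sum_bool] at this
  have hr : e * Real.log 2 + (1 - e) * Real.log 2 = Real.log 2 := by ring
  nlinarith [this]

noncomputable def nE {α : Type*} [Fintype α] (f : α → ℝ) : ℝ := ∑ a, f a * Real.log (f a)

lemma mul_log_scale {c x : ℝ} (hc : 0 ≤ c) (hx : 0 ≤ x) :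
    (c * x) * Real.log (c * x) = (c * x) * Real.log c + c * (x * Real.log x) := by
  rcases eq_or_lt_of_le hc with hc0 | hc0
  · simp [← hc0]
  rcases eq_or_lt_of_le hx with h | h
  · simp [← h]
  · rw [Real.log_mul hc0.ne' h.ne']; ring

/-- Sum over a function space of a product times a function of one coordinate. -/
lemma sum_prod_mul_comp {Y : Type*} [Fintype Y] [DecidableEq Y] {n : ℕ}
    (g : Fin n → Y → ℝ) (h1 : ∀ j, ∑ y, g j y = 1) (i : Fin n) (h : Y → ℝ) :
    ∑ ys : Fin n → Y, (∏ j, g j (ys j)) * h (ys i) = ∑ y, g i y * h y := by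
  classical
  set g' : Fin n → Y → ℝ := fun j y => if j = i then g i y * h y else g j y with hg'
  have key := sum_prod_fun g'
  have hL : ∀ ys : Fin n → Y, ∏ j, g' j (ys j) = (∏ j, g j (ys j)) * h (ys i) := by
    intro ys
    rw [← Finset.mul_prod_erase Finset.univ (fun j => g' j (ys j)) (Finset.mem_univ i),
        ← Finset.mul_prod_erase Finset.univ (fun j => g j (ys j)) (Finset.mem_univ i)]
    have : ∀ j ∈ Finset.univ.erase i, g' j (ys j) = g j (ys j) := by
      intro j hj
      simp [hg', Finset.mem_erase.mp hj |>.1]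
    rw [Finset.prod_congr rfl this]
    simp [hg']
    ring
  have hR : ∏ j, ∑ y, g' j y = ∑ y, g i y * h y := by
    rw [Finset.prod_eq_single i]
    · simp [hg']
    · intro j _ hj
      simp [hg', hj, h1 j]
    · simp
  rw [← hR, ← key]
  exact Finset.sum_congr rfl (fun ys _ => (hL ys).symm)

/-- Entropy sum of a product distribution. -/
lemma nE_prod {Y : Type*} [Fintype Y] [DecidableEq Y] {n : ℕ}
    (g : Fin n → Y → ℝ) (h0 : ∀ i y, 0 ≤ g i y) (h1 : ∀ i, ∑ y, g i y = 1) :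
    nE (fun ys : Fin n → Y => ∏ i, g i (ys i)) = ∑ i, nE (g i) := by
  classical
  have key : ∀ ys : Fin n → Y, (∏ i, g i (ys i)) * Real.log (∏ i, g i (ys i))
      = ∑ i, (∏ j, g j (ys j)) * Real.log (g i (ys i)) := by
    intro ys
    by_cases hz : ∀ i, g i (ys i) ≠ 0
    · rw [Real.log_prod (fun i _ => hz i), Finset.mul_sum]
    · push_neg at hz
      obtain ⟨i0, hi0⟩ := hz
      have : ∏ i, g i (ys i) = 0 := Finset.prod_eq_zero (Finset.mem_univ i0) hi0
      simp [this]
  unfold nE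
  rw [Finset.sum_congr rfl (fun ys _ => key ys), Finset.sum_comm]
  exact Finset.sum_congr rfl (fun i _ => sum_prod_mul_comp g h1 i (fun y => Real.log (g i y)))

/-- Subadditivity of entropy (in negEnt form). -/
lemma nE_subadd {Y : Type*} [Fintype Y] [DecidableEq Y] {n : ℕ}
    (Rd : (Fin n → Y) → ℝ) (h0 : ∀ ys, 0 ≤ Rd ys) (h1 : ∑ ys, Rd ys = 1) :
    ∑ i, nE (fun y => ∑ ys, if ys i = y then Rd ys else 0) ≤ nE Rd := by
  classical
  set marg : Fin n → Y → ℝ := fun i y => ∑ ys, if ys i = y then Rd ys else 0 with hmarg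
  show ∑ i, nE (marg i) ≤ nE Rd
  have hm0 : ∀ i y, 0 ≤ marg i y := fun i y =>
    Finset.sum_nonneg (fun ys _ => by split <;> [exact h0 ys; exact le_rfl])
  have hm1 : ∀ i, ∑ y, marg i y = 1 := by
    intro i
    rw [hmarg]
    rw [Finset.sum_comm]
    simp only [Finset.sum_ite_eq, Finset.mem_univ, if_true]
    exact h1
  have hle : ∀ i (ys : Fin n → Y), Rd ys ≤ marg i (ys i) := by
    intro i ys
    have := Finset.single_le_sum (f := fun ys' : Fin n → Y => if ys' i = ys i then Rd ys' else 0)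
      (fun ys' _ => by split <;> [exact h0 ys'; exact le_rfl]) (Finset.mem_univ ys)
    simpa using this
  have hgibbs := gibbs (P := Rd) (q := fun ys => ∏ i, marg i (ys i)) h0
    (fun ys => Finset.prod_nonneg (fun i _ => hm0 i (ys i)))
    h1
    (le_of_eq (by rw [sum_prod_fun]; simp [hm1]))
    (by
      intro ys hq
      obtain ⟨i, _, hi⟩ := Finset.prod_eq_zero_iff.mp hq
      have := hle i ys
      rw [hi] at this
      linarith [h0 ys])
  have hcross : ∑ ys, Rd ys * Real.log (∏ i, marg i (ys i))
      = ∑ i, nE (marg i) := by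
    have key : ∀ ys, Rd ys * Real.log (∏ i, marg i (ys i))
        = ∑ i, Rd ys * Real.log (marg i (ys i)) := by
      intro ys
      rcases eq_or_lt_of_le (h0 ys) with h | h
      · simp [← h]
      · have hne : ∀ i ∈ Finset.univ, marg i (ys i) ≠ 0 := by
          intro i _
          have := hle i ys
          intro hc; rw [hc] at this; linarith
        rw [Real.log_prod hne, Finset.mul_sum]
    rw [Finset.sum_congr rfl (fun ys _ => key ys), Finset.sum_comm]
    refine Finset.sum_congr rfl (fun i _ => ?_)
    have := sum_mul_comp Rd (fun ys : Fin n → Y => ys i) (fun y => Real.log (marg i y))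
    rw [this]
    rfl
  calc ∑ i, nE (marg i) = ∑ ys, Rd ys * Real.log (∏ i, marg i (ys i)) := hcross.symm
    _ ≤ nE Rd := hgibbs

/-- mutInfo in terms of natural-log entropies. -/
lemma mutInfo_log2 {B Y' : Type*} [Fintype B] [Fintype Y'] (μ : B → Y' → ℝ)
    (h0 : ∀ b y, 0 ≤ μ b y) :
    Real.log 2 * mutInfo μ = (∑ b, ∑ y, μ b y * Real.log (μ b y))
      - nE (fun b => ∑ y, μ b y) - nE (fun y => ∑ b, μ b y) := by
  classical
  set r : B → ℝ := fun b => ∑ y, μ b y with hr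
  set c : Y' → ℝ := fun y => ∑ b, μ b y with hc
  have key : ∀ b y, Real.log 2 * (if μ b y = 0 then 0 else
      μ b y * Real.logb 2 (μ b y / ((∑ y', μ b y') * (∑ b', μ b' y))))
      = μ b y * Real.log (μ b y) - μ b y * Real.log (r b) - μ b y * Real.log (c y) := by
    intro b y
    by_cases hz : μ b y = 0
    · simp [hz]
    · have hμ : 0 < μ b y := lt_of_le_of_ne (h0 b y) (Ne.symm hz)
      have hrb : 0 < r b := lt_of_lt_of_le hμ
        (Finset.single_le_sum (f := fun y' => μ b y') (fun y' _ => h0 b y') (Finset.mem_univ y))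
      have hcy : 0 < c y := lt_of_lt_of_le hμ
        (Finset.single_le_sum (f := fun b' => μ b' y) (fun b' _ => h0 b' y) (Finset.mem_univ b))
      rw [if_neg hz]
      rw [Real.logb, Real.log_div hz (by positivity), Real.log_mul hrb.ne' hcy.ne']
      have hl2 : Real.log 2 ≠ 0 := ne_of_gt (Real.log_pos (by norm_num))
      field_simp
      ring
  unfold mutInfo nE
  rw [Finset.mul_sum]
  rw [Finset.sum_congr rfl (fun b _ => by rw [Finset.mul_sum, Finset.sum_congr rfl (fun y _ => key b y)])]
  have e1 : ∑ b, ∑ y, μ b y * Real.log (r b) = ∑ b, r b * Real.log (r b) := by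
    refine Finset.sum_congr rfl (fun b _ => ?_)
    rw [← Finset.sum_mul]
  have e2 : ∑ b, ∑ y, μ b y * Real.log (c y) = ∑ y, c y * Real.log (c y) := by
    rw [Finset.sum_comm]
    refine Finset.sum_congr rfl (fun y _ => ?_)
    rw [← Finset.sum_mul]
  simp only [Finset.sum_sub_distrib]
  rw [e1, e2]

lemma nE_scale {ι β : Type*} [Fintype ι] [Fintype β] (K : ι → β → ℝ)
    (hK0 : ∀ i b, 0 ≤ K i b) (hK1 : ∀ i, ∑ b, K i b = 1) {c : ℝ} (hc : 0 ≤ c) :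
    ∑ i, ∑ b, (c * K i b) * Real.log (c * K i b)
      = (Fintype.card ι : ℝ) * (c * Real.log c) + c * ∑ i, nE (K i) := by
  have key : ∀ i, ∑ b, (c * K i b) * Real.log (c * K i b)
      = c * Real.log c + c * nE (K i) := by
    intro i
    rw [Finset.sum_congr rfl (fun b _ => mul_log_scale hc (hK0 i b)),
      Finset.sum_add_distrib]
    congr 1
    · have : ∑ b, c * K i b * Real.log c = (c * ∑ b, K i b) * Real.log c := by
        rw [Finset.mul_sum, Finset.sum_mul]
      rw [this, hK1 i]; ring
    · rw [nE, Finset.mul_sum]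
  rw [Finset.sum_congr rfl (fun i _ => key i), Finset.sum_add_distrib,
    Finset.sum_const, Finset.card_univ, nsmul_eq_mul, Finset.mul_sum]

/-- Upper bound on mutual information, for bddAbove. -/
lemma mutInfo_le_card {B Y' : Type*} [Fintype B] [Fintype Y'] (μ : B → Y' → ℝ)
    (h0 : ∀ b y, 0 ≤ μ b y) (hsum : ∑ b, ∑ y, μ b y = 1) :
    Real.log 2 * mutInfo μ ≤ Real.log (Fintype.card B) := by
  have hBne : Nonempty B := by
    by_contra h
    rw [not_nonempty_iff] at h
    simp [Finset.univ_eq_empty] at hsum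
  have hcard : 0 < (Fintype.card B : ℝ) := by
    have := Fintype.card_pos (α := B); positivity
  rw [mutInfo_log2 μ h0]
  set r : B → ℝ := fun b => ∑ y, μ b y with hr
  set c : Y' → ℝ := fun y => ∑ b, μ b y with hc
  have hr0 : ∀ b, 0 ≤ r b := fun b => Finset.sum_nonneg (fun y _ => h0 b y)
  have hc0 : ∀ y, 0 ≤ c y := fun y => Finset.sum_nonneg (fun b _ => h0 b y)
  have hr1 : ∑ b, r b = 1 := hsum
  -- ∑∑ μ log μ ≤ nE c
  have hS : (∑ b, ∑ y, μ b y * Real.log (μ b y)) ≤ nE c := by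
    have key : ∀ b y, μ b y * Real.log (μ b y) ≤ μ b y * Real.log (c y) := by
      intro b y
      rcases eq_or_lt_of_le (h0 b y) with h | h
      · simp [← h]
      · have hle : μ b y ≤ c y :=
          Finset.single_le_sum (f := fun b' => μ b' y) (fun b' _ => h0 b' y) (Finset.mem_univ b)
        exact mul_le_mul_of_nonneg_left (Real.log_le_log h hle) (h0 b y)
    calc ∑ b, ∑ y, μ b y * Real.log (μ b y)
        ≤ ∑ b, ∑ y, μ b y * Real.log (c y) :=
          Finset.sum_le_sum (fun b _ => Finset.sum_le_sum (fun y _ => key b y))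
      _ = ∑ y, c y * Real.log (c y) := by
          rw [Finset.sum_comm]
          exact Finset.sum_congr rfl (fun y _ => (Finset.sum_mul _ _ _).symm)
  -- -nE r ≤ log card B
  have hent : -Real.log (Fintype.card B) ≤ nE r := by
    have := gibbs (P := r) (q := fun _ => (Fintype.card B : ℝ)⁻¹) hr0
      (fun _ => by positivity) hr1
      (le_of_eq (by rw [Finset.sum_const, Finset.card_univ, nsmul_eq_mul,
        mul_inv_cancel₀ hcard.ne']))
      (fun b hb => absurd hb (by positivity))
    simp only [Real.log_inv, mul_neg] at this
    have h2 : ∑ a, -(r a * Real.log (Fintype.card B)) = -Real.log (Fintype.card B) := by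
      rw [Finset.sum_neg_distrib, ← Finset.sum_mul, hr1, one_mul]
    rw [h2] at this
    exact this
  have : nE c - nE c = 0 := sub_self _
  linarith [hS, hent]

/-- Single-letterization for a memoryless channel with per-coordinate channels `V i`. -/
lemma single_letter {B Y' M : Type*} [Fintype B] [Fintype Y'] [Fintype M]
    [DecidableEq B] [DecidableEq Y'] [Nonempty M] {n : ℕ}
    (V : Fin n → B → Y' → ℝ) (hV0 : ∀ i b y, 0 ≤ V i b y)
    (hV1 : ∀ i b, ∑ y, V i b y = 1) (f : M → Fin n → B) (C' : ℝ)
    (hC' : ∀ (i : Fin n) (PB : B → ℝ), (∀ b, 0 ≤ PB b) → (∑ b, PB b = 1) →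
      Real.log 2 * mutInfo (fun b y => PB b * V i b y) ≤ C') :
    Real.log (Fintype.card M)
      + ∑ m, ∑ ys : Fin n → Y', ((Fintype.card M : ℝ)⁻¹ * ∏ i, V i (f m i) (ys i))
          * Real.log ((Fintype.card M : ℝ)⁻¹ * ∏ i, V i (f m i) (ys i))
      - nE (fun ys : Fin n → Y' => ∑ m, (Fintype.card M : ℝ)⁻¹ * ∏ i, V i (f m i) (ys i))
    ≤ (n : ℝ) * C' := by
  classical
  set c : ℝ := (Fintype.card M : ℝ)⁻¹ with hcdef
  have hcardM : 0 < (Fintype.card M : ℝ) := by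
    have := Fintype.card_pos (α := M); positivity
  have hc : 0 < c := by positivity
  have hcard1 : (Fintype.card M : ℝ) * c = 1 := mul_inv_cancel₀ hcardM.ne'
  set T : M → (Fin n → Y') → ℝ := fun m ys => ∏ i, V i (f m i) (ys i) with hTdef
  have hT0 : ∀ m ys, 0 ≤ T m ys := fun m ys => Finset.prod_nonneg (fun i _ => hV0 _ _ _)
  have hT1 : ∀ m, ∑ ys, T m ys = 1 := by
    intro m
    rw [hTdef]
    rw [sum_prod_fun]
    simp [hV1]
  set PB : Fin n → B → ℝ := fun i b => ∑ m, if f m i = b then c else 0 with hPBdef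
  have hPB0 : ∀ i b, 0 ≤ PB i b := fun i b =>
    Finset.sum_nonneg (fun m _ => by split <;> [exact hc.le; exact le_rfl])
  have hPB1 : ∀ i, ∑ b, PB i b = 1 := by
    intro i
    rw [hPBdef]
    rw [Finset.sum_comm]
    simp only [Finset.sum_ite_eq, Finset.mem_univ, if_true]
    rw [Finset.sum_const, Finset.card_univ, nsmul_eq_mul, hcard1]
  -- the grouping helper : for any h : B → ℝ
  have group : ∀ (i : Fin n) (h : B → ℝ),
      ∑ m, c * h (f m i) = ∑ b, PB i b * h b := by
    intro i h
    have := sum_mul_comp (fun _ : M => c) (fun m => f m i) h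
    rw [this]
  -- (A) value of the double sum (joint entropy part)
  have hA : ∑ m, ∑ ys : Fin n → Y', (c * T m ys) * Real.log (c * T m ys)
      = -Real.log (Fintype.card M) + ∑ i, ∑ b, PB i b * nE (V i b) := by
    rw [nE_scale T hT0 hT1 hc.le]
    have h1 : (Fintype.card M : ℝ) * (c * Real.log c) = -Real.log (Fintype.card M) := by
      rw [← mul_assoc, hcard1, one_mul, hcdef, Real.log_inv]
    have h2 : ∀ m, nE (T m) = ∑ i, nE (V i (f m i)) := by
      intro m
      exact nE_prod (fun i => V i (f m i)) (fun i y => hV0 _ _ _) (fun i => hV1 _ _)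
    have h3 : c * ∑ m, nE (T m) = ∑ i, ∑ b, PB i b * nE (V i b) := by
      rw [Finset.mul_sum,
        Finset.sum_congr rfl (fun m _ => by rw [h2 m, Finset.mul_sum]),
        Finset.sum_comm]
      exact Finset.sum_congr rfl (fun i _ => group i (fun b => nE (V i b)))
    rw [h1, h3]
  -- (B) output marginal and subadditivity
  set Rd : (Fin n → Y') → ℝ := fun ys => ∑ m, c * T m ys with hRdef
  have hR0 : ∀ ys, 0 ≤ Rd ys := fun ys =>
    Finset.sum_nonneg (fun m _ => mul_nonneg hc.le (hT0 m ys))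
  have hR1 : ∑ ys, Rd ys = 1 := by
    rw [hRdef, Finset.sum_comm]
    have : ∀ m, ∑ ys, c * T m ys = c := by
      intro m; rw [← Finset.mul_sum, hT1, mul_one]
    rw [Finset.sum_congr rfl (fun m _ => this m), Finset.sum_const, Finset.card_univ,
      nsmul_eq_mul, hcard1]
  have hmarg : ∀ (i : Fin n) (y : Y'),
      (∑ ys : Fin n → Y', if ys i = y then Rd ys else 0) = ∑ b, PB i b * V i b y := by
    intro i y
    have step1 : (∑ ys : Fin n → Y', if ys i = y then Rd ys else 0)
        = ∑ m, c * ∑ ys : Fin n → Y', T m ys * (if ys i = y then 1 else 0) := by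
      have e1 : ∀ ys : Fin n → Y', (if ys i = y then Rd ys else 0)
          = ∑ m, c * (T m ys * if ys i = y then 1 else 0) := by
        intro ys
        by_cases hcond : ys i = y
        · simp only [if_pos hcond, mul_one, hRdef]
        · simp only [if_neg hcond, mul_zero]
          simp
      rw [Finset.sum_congr rfl (fun ys _ => e1 ys), Finset.sum_comm]
      exact Finset.sum_congr rfl (fun m _ => by rw [Finset.mul_sum])
    have step2 : ∀ m, (∑ ys : Fin n → Y', T m ys * (if ys i = y then 1 else 0))
        = V i (f m i) y := by
      intro m
      rw [hTdef]
      rw [sum_prod_mul_comp (fun j => V j (f m j)) (fun j => hV1 j (f m j)) i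
        (fun y' => if y' = y then 1 else 0)]
      simp [mul_ite]
    rw [step1, Finset.sum_congr rfl (fun m _ => by rw [step2 m]),
      group i (fun b => V i b y)]
  have hsub : ∑ i, nE (fun y => ∑ b, PB i b * V i b y) ≤ nE Rd := by
    have := nE_subadd Rd hR0 hR1
    refine le_trans (le_of_eq ?_) this
    refine Finset.sum_congr rfl (fun i _ => ?_)
    congr 1
    funext y
    rw [← hmarg i y]
  -- (C) identify mutInfo
  have hident : ∀ i : Fin n, Real.log 2 * mutInfo (fun b y => PB i b * V i b y)
      = (∑ b, PB i b * nE (V i b)) - nE (fun y => ∑ b, PB i b * V i b y) := by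
    intro i
    rw [mutInfo_log2 _ (fun b y => mul_nonneg (hPB0 i b) (hV0 i b y))]
    have hrow : (fun b => ∑ y, PB i b * V i b y) = PB i := by
      funext b; rw [← Finset.mul_sum, hV1, mul_one]
    have hjoint : ∀ b, (∑ y, (PB i b * V i b y) * Real.log (PB i b * V i b y))
        = PB i b * Real.log (PB i b) + PB i b * nE (V i b) := by
      intro b
      rw [Finset.sum_congr rfl (fun y _ => mul_log_scale (hPB0 i b) (hV0 i b y)),
        Finset.sum_add_distrib]
      congr 1
      · have : ∑ y, PB i b * V i b y * Real.log (PB i b)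
            = (PB i b * ∑ y, V i b y) * Real.log (PB i b) := by
          rw [Finset.mul_sum, Finset.sum_mul]
        rw [this, hV1, mul_one]
      · rw [nE, Finset.mul_sum]
    rw [Finset.sum_congr rfl (fun b _ => hjoint b), Finset.sum_add_distrib, hrow]
    rw [nE]
    ring
  -- assemble
  have final : ∑ i, (Real.log 2 * mutInfo (fun b y => PB i b * V i b y)) ≤ (n : ℝ) * C' := by
    calc ∑ i, (Real.log 2 * mutInfo (fun b y => PB i b * V i b y))
        ≤ ∑ _i : Fin n, C' := Finset.sum_le_sum (fun i _ => hC' i (PB i) (hPB0 i) (hPB1 i))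
      _ = (n : ℝ) * C' := by rw [Finset.sum_const, Finset.card_univ, Fintype.card_fin,
            nsmul_eq_mul]
  have hsum_ident : ∑ i, (Real.log 2 * mutInfo (fun b y => PB i b * V i b y))
      = (∑ i, ∑ b, PB i b * nE (V i b)) - ∑ i, nE (fun y => ∑ b, PB i b * V i b y) := by
    rw [Finset.sum_congr rfl (fun i _ => hident i), Finset.sum_sub_distrib]
  rw [hA]
  have : Real.log (Fintype.card M) + (-Real.log (Fintype.card M)
      + ∑ i, ∑ b, PB i b * nE (V i b)) - nE Rd
      = (∑ i, ∑ b, PB i b * nE (V i b)) - nE Rd := by ring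
  rw [this]
  linarith [hsub, final, hsum_ident.symm.le, hsum_ident.le]

lemma sum3_rot {α β γ : Type*} [Fintype α] [Fintype β] [Fintype γ] (F : α → β → γ → ℝ) :
    ∑ b : β, ∑ c : γ, ∑ a : α, F a b c = ∑ a : α, ∑ b : β, ∑ c : γ, F a b c := by
  calc ∑ b : β, ∑ c : γ, ∑ a : α, F a b c
      = ∑ b : β, ∑ a : α, ∑ c : γ, F a b c :=
        Finset.sum_congr rfl (fun b _ => Finset.sum_comm)
    _ = ∑ a : α, ∑ b : β, ∑ c : γ, F a b c := Finset.sum_comm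

section PerN

variable {XA XB Y : Type*} [Fintype XA] [Fintype XB] [Fintype Y] [DecidableEq Y]
  {Msp : Type*} [Fintype Msp] [Nonempty Msp] [AddCommGroup Msp] [DecidableEq Msp]
  {n : ℕ}

/-- The per-blocklength Fano-converse inequality. -/
lemma per_n (W : XA → XB → Y → ℝ) (hW : ∀ a b y, 0 ≤ W a b y)
    (hW1 : ∀ a b, ∑ y, W a b y = 1)
    (eA : Msp → Fin n → XA) (eB : Msp → Fin n → XB) (dec : (Fin n → Y) → Msp)
    (C' : ℝ)
    (hC' : ∀ (a : XA) (PB : XB → ℝ), (∀ b, 0 ≤ PB b) → (∑ b, PB b = 1) →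
      Real.log 2 * mutInfo (fun b y => PB b * W a b y) ≤ C')
    (ε : ℝ)
    (hεdef : ε = ∑ a : Msp, ∑ s : Msp, ∑ ys : Fin n → Y,
      ((Fintype.card Msp : ℝ)⁻¹ * ((Fintype.card Msp : ℝ)⁻¹
        * ∏ i, W (eA a i) (eB (s - a) i) (ys i))) * (if dec ys = s then 0 else 1))
    (hε1 : ε < 1) :
    (1 - ε) * Real.log (Fintype.card Msp) ≤ Real.log 2 + (n : ℝ) * C' := by
  classical
  set c : ℝ := (Fintype.card Msp : ℝ)⁻¹ with hcdef
  have hcardM : 0 < (Fintype.card Msp : ℝ) := by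
    have := Fintype.card_pos (α := Msp); positivity
  have hc : 0 < c := by positivity
  have hcard1 : (Fintype.card Msp : ℝ) * c = 1 := mul_inv_cancel₀ hcardM.ne'
  set T : Msp → Msp → (Fin n → Y) → ℝ :=
    fun a s ys => ∏ i, W (eA a i) (eB (s - a) i) (ys i) with hTdef
  have hT0 : ∀ a s ys, 0 ≤ T a s ys := fun a s ys =>
    Finset.prod_nonneg (fun i _ => hW _ _ _)
  have hT1 : ∀ a s, ∑ ys, T a s ys = 1 := by
    intro a s
    rw [hTdef, sum_prod_fun]
    simp [hW1]
  set Pfull : Msp × Msp × (Fin n → Y) → ℝ :=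
    fun z => c * (c * T z.1 z.2.1 z.2.2) with hPdef
  have hP0 : ∀ z, 0 ≤ Pfull z := fun z => by
    have := hT0 z.1 z.2.1 z.2.2; positivity
  set J : Msp → Msp × (Fin n → Y) → ℝ := fun a w => c * T a w.1 w.2 with hJdef
  have hJ0 : ∀ a w, 0 ≤ J a w := fun a w => mul_nonneg hc.le (hT0 _ _ _)
  have hJ1 : ∀ a, ∑ w, J a w = 1 := by
    intro a
    rw [Fintype.sum_prod_type]
    have : ∀ s, ∑ ys, J a (s, ys) = c := by
      intro s
      rw [hJdef]
      dsimp only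
      rw [← Finset.mul_sum, hT1, mul_one]
    rw [Finset.sum_congr rfl (fun s _ => this s), Finset.sum_const, Finset.card_univ,
      nsmul_eq_mul, hcard1]
  set R : Msp → (Fin n → Y) → ℝ := fun a ys => ∑ s, c * T a s ys with hRdef
  have hR0 : ∀ a ys, 0 ≤ R a ys := fun a ys =>
    Finset.sum_nonneg (fun s _ => mul_nonneg hc.le (hT0 _ _ _))
  have hR1 : ∀ a, ∑ ys, R a ys = 1 := by
    intro a
    rw [hRdef, Finset.sum_comm]
    have : ∀ s, ∑ ys, c * T a s ys = c := by
      intro s; rw [← Finset.mul_sum, hT1, mul_one]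
    rw [Finset.sum_congr rfl (fun s _ => this s), Finset.sum_const, Finset.card_univ,
      nsmul_eq_mul, hcard1]
  set PSY : Msp × (Fin n → Y) → ℝ := fun w => ∑ a, Pfull (a, w) with hPSYdef
  set PAY : Msp × (Fin n → Y) → ℝ := fun w => ∑ s, Pfull (w.1, s, w.2) with hPAYdef
  set PY : (Fin n → Y) → ℝ := fun ys => ∑ s, PSY (s, ys) with hPYdef
  have hPSY0 : ∀ w, 0 ≤ PSY w := fun w => Finset.sum_nonneg (fun a _ => hP0 _)
  have hPAY0 : ∀ w, 0 ≤ PAY w := fun w => Finset.sum_nonneg (fun s _ => hP0 _)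
  have hPY0 : ∀ ys, 0 ≤ PY ys := fun ys => Finset.sum_nonneg (fun s _ => hPSY0 _)
  have hPAYJ : ∀ w, PAY w = c * R w.1 w.2 := by
    intro w
    rw [hPAYdef, hRdef]
    dsimp only
    rw [Finset.mul_sum]
  have hPSY1 : ∑ w, PSY w = 1 := by
    rw [hPSYdef, Finset.sum_comm]
    have : ∀ a, ∑ w : Msp × (Fin n → Y), Pfull (a, w) = c * ∑ w, J a w := by
      intro a
      rw [Finset.mul_sum]
    rw [Finset.sum_congr rfl (fun a _ => this a)]
    have : ∀ a : Msp, c * ∑ w, J a w = c := by intro a; rw [hJ1, mul_one]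
    rw [Finset.sum_congr rfl (fun a _ => this a), Finset.sum_const, Finset.card_univ,
      nsmul_eq_mul, hcard1]
  have hPY1 : ∑ ys, PY ys = 1 := by
    rw [hPYdef, ← hPSY1, Fintype.sum_prod_type, Finset.sum_comm]
  have hPfull_le_PSY : ∀ z : Msp × Msp × (Fin n → Y), Pfull z ≤ PSY z.2 :=
    fun z => Finset.single_le_sum (f := fun a => Pfull (a, z.2)) (fun a _ => hP0 _)
      (Finset.mem_univ z.1)
  have hPfull_le_PAY : ∀ z : Msp × Msp × (Fin n → Y), Pfull z ≤ PAY (z.1, z.2.2) :=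
    fun z => Finset.single_le_sum (f := fun s => Pfull (z.1, s, z.2.2)) (fun s _ => hP0 _)
      (Finset.mem_univ z.2.1)
  have hPSY_le_PY : ∀ w : Msp × (Fin n → Y), PSY w ≤ PY w.2 :=
    fun w => Finset.single_le_sum (f := fun s => PSY (s, w.2)) (fun s _ => hPSY0 _)
      (Finset.mem_univ w.1)
  -- error probability in PSY form
  have hεPSY : ε = ∑ w : Msp × (Fin n → Y), PSY w * (if dec w.2 = w.1 then 0 else 1) := by
    have e1 : ∑ w : Msp × (Fin n → Y), PSY w * (if dec w.2 = w.1 then 0 else 1)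
        = ∑ s, ∑ ys, ∑ a, Pfull (a, s, ys) * (if dec ys = s then 0 else 1) := by
      rw [Fintype.sum_prod_type]
      exact Finset.sum_congr rfl (fun s _ => Finset.sum_congr rfl (fun ys _ =>
        Finset.sum_mul _ _ _))
    rw [hεdef, e1,
      sum3_rot (F := fun a s ys => Pfull (a, s, ys) * (if dec ys = s then 0 else 1))]
  have hε0 : 0 ≤ ε := by
    rw [hεPSY]
    refine Finset.sum_nonneg (fun w _ => mul_nonneg (hPSY0 w) ?_)
    split <;> norm_num
  -- Fano : nE PY - nE PSY ≤ log 2 + ε * log (card Msp)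
  have herr_bound : ∀ w : Msp × (Fin n → Y), dec w.2 ≠ w.1 → PSY w ≤ ε := by
    intro w hne
    rw [hεPSY]
    have h1 : PSY w * (if dec w.2 = w.1 then 0 else 1) = PSY w := by
      rw [if_neg hne, mul_one]
    rw [← h1]
    exact Finset.single_le_sum (f := fun w' : Msp × (Fin n → Y) =>
      PSY w' * (if dec w'.2 = w'.1 then 0 else 1))
      (fun w' _ => mul_nonneg (hPSY0 _) (by split <;> norm_num)) (Finset.mem_univ w)
  have fano : nE PY - nE PSY ≤ Real.log 2 + ε * Real.log (Fintype.card Msp) := by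
    set q : Msp × (Fin n → Y) → ℝ :=
      fun w => PY w.2 * (if dec w.2 = w.1 then 1 - ε else ε * c) with hqdef
    have hq0 : ∀ w, 0 ≤ q w := by
      intro w
      refine mul_nonneg (hPY0 _) ?_
      split
      · linarith
      · positivity
    have hqsum : ∑ w, q w ≤ 1 := by
      have inner : ∀ ys, (∑ s, if dec ys = s then (1 - ε) else ε * c) = 1 - ε * c := by
        intro ys
        have e : ∀ s : Msp, (if dec ys = s then (1 - ε) else ε * c)
            = ε * c + (if dec ys = s then (1 - ε - ε * c) else 0) := by
          intro s; split <;> ring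
        rw [Finset.sum_congr rfl (fun s _ => e s), Finset.sum_add_distrib,
          Finset.sum_const, Finset.sum_ite_eq, Finset.card_univ, nsmul_eq_mul]
        simp only [Finset.mem_univ, if_true]
        have : (Fintype.card Msp : ℝ) * (ε * c) = ε := by
          rw [mul_comm ε c, ← mul_assoc, hcard1, one_mul]
        rw [this]; ring
      have e2 : ∑ w, q w = (1 - ε * c) * ∑ ys, PY ys := by
        rw [Fintype.sum_prod_type, Finset.sum_comm, Finset.mul_sum]
        refine Finset.sum_congr rfl (fun ys _ => ?_)
        simp only [hqdef]
        rw [← Finset.mul_sum, inner ys, mul_comm]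
      rw [e2, hPY1, mul_one]
      linarith [mul_nonneg hε0 hc.le]
    have habs : ∀ w, q w = 0 → PSY w = 0 := by
      intro w hqw
      rcases mul_eq_zero.mp hqw with h | h
      · have := hPSY_le_PY w
        rw [h] at this
        exact le_antisymm this (hPSY0 w)
      · by_cases hd : dec w.2 = w.1
        · rw [if_pos hd] at h; linarith
        · rw [if_neg hd] at h
          rcases mul_eq_zero.mp h with h' | h'
          · have := herr_bound w hd
            rw [h'] at this
            exact le_antisymm this (hPSY0 w)
          · exact absurd h' hc.ne'
    have hgibbs := gibbs (P := PSY) (q := q) hPSY0 hq0 hPSY1 hqsum habs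
    -- split cross term
    have key : ∀ w, PSY w * Real.log (q w)
        = PSY w * Real.log (PY w.2)
          + PSY w * Real.log (if dec w.2 = w.1 then 1 - ε else ε * c) := by
      intro w
      rcases eq_or_lt_of_le (hPSY0 w) with h | h
      · rw [← h]; ring
      · have hPYpos : 0 < PY w.2 := lt_of_lt_of_le h (hPSY_le_PY w)
        have hitepos : 0 < (if dec w.2 = w.1 then 1 - ε else ε * c) := by
          split
          · linarith
          · next hd =>
            have := herr_bound w hd
            have : 0 < ε := lt_of_lt_of_le h this
            positivity
        rw [hqdef]
        dsimp only
        rw [Real.log_mul hPYpos.ne' hitepos.ne']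
        ring
    have part1 : ∑ w, PSY w * Real.log (PY w.2) = nE PY := by
      rw [Fintype.sum_prod_type, Finset.sum_comm, nE]
      refine Finset.sum_congr rfl (fun ys _ => ?_)
      dsimp only
      rw [← Finset.sum_mul]
    have hcorrsum : ∑ w : Msp × (Fin n → Y), (if dec w.2 = w.1 then PSY w else 0)
        = 1 - ε := by
      have e : ∀ w : Msp × (Fin n → Y), (if dec w.2 = w.1 then PSY w else 0)
          = PSY w - PSY w * (if dec w.2 = w.1 then 0 else 1) := by
        intro w; split <;> ring
      rw [Finset.sum_congr rfl (fun w _ => e w), Finset.sum_sub_distrib, hPSY1, ← hεPSY]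
    have herrsum : ∑ w : Msp × (Fin n → Y), (if dec w.2 = w.1 then 0 else PSY w) = ε := by
      have e : ∀ w : Msp × (Fin n → Y), (if dec w.2 = w.1 then 0 else PSY w)
          = PSY w * (if dec w.2 = w.1 then 0 else 1) := by
        intro w; split <;> ring
      rw [Finset.sum_congr rfl (fun w _ => e w), ← hεPSY]
    have part2 : ∑ w, PSY w * Real.log (if dec w.2 = w.1 then 1 - ε else ε * c)
        = (1 - ε) * Real.log (1 - ε) + ε * Real.log (ε * c) := by
      have e : ∀ w : Msp × (Fin n → Y),
          PSY w * Real.log (if dec w.2 = w.1 then 1 - ε else ε * c)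
          = (if dec w.2 = w.1 then PSY w else 0) * Real.log (1 - ε)
            + (if dec w.2 = w.1 then 0 else PSY w) * Real.log (ε * c) := by
        intro w; split <;> ring
      rw [Finset.sum_congr rfl (fun w _ => e w), Finset.sum_add_distrib,
        ← Finset.sum_mul, ← Finset.sum_mul, hcorrsum, herrsum]
    have hεlog : ε * Real.log (ε * c) = ε * Real.log ε - ε * Real.log (Fintype.card Msp) := by
      rcases eq_or_lt_of_le hε0 with h | h
      · rw [← h]; ring
      · rw [Real.log_mul h.ne' hc.ne', hcdef, Real.log_inv]; ring
    have hbin := binEnt_le hε0 hε1.le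
    have hcross : ∑ w, PSY w * Real.log (q w)
        = nE PY + ((1 - ε) * Real.log (1 - ε) + ε * Real.log ε
            - ε * Real.log (Fintype.card Msp)) := by
      rw [Finset.sum_congr rfl (fun w _ => key w), Finset.sum_add_distrib, part1, part2,
        hεlog]
      ring
    rw [hcross] at hgibbs
    have : nE PSY = ∑ w, PSY w * Real.log (PSY w) := rfl
    rw [← this] at hgibbs
    linarith [hbin, hgibbs]
  -- submodularity : nE PSY + nE PAY - nE PY ≤ nE Pfull
  have hPfull1 : ∑ z : Msp × Msp × (Fin n → Y), Pfull z = 1 := by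
    rw [Fintype.sum_prod_type, Finset.sum_comm, ← hPSY1]
  have haay : ∀ ys, ∑ a, PAY (a, ys) = PY ys := by
    intro ys
    rw [hPYdef]
    dsimp only
    rw [Finset.sum_comm]
  have submod : nE PSY + nE PAY - nE PY ≤ nE Pfull := by
    set q2 : Msp × Msp × (Fin n → Y) → ℝ := fun z =>
      if PY z.2.2 = 0 then 0 else PSY z.2 * PAY (z.1, z.2.2) / PY z.2.2 with hq2def
    have hq20 : ∀ z, 0 ≤ q2 z := by
      intro z
      rw [hq2def]
      dsimp only
      split
      · exact le_rfl
      · exact div_nonneg (mul_nonneg (hPSY0 _) (hPAY0 _)) (hPY0 _)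
    have hq2sum : ∑ z, q2 z ≤ 1 := by
      have e1 : ∑ z : Msp × Msp × (Fin n → Y), q2 z
          = ∑ ys, ∑ a, ∑ s, q2 (a, s, ys) := by
        rw [Fintype.sum_prod_type]
        rw [← sum3_rot (F := fun ys a s => q2 (a, s, ys))]
        refine Finset.sum_congr rfl (fun a _ => ?_)
        rw [Fintype.sum_prod_type, Finset.sum_comm]
      have e2 : ∀ ys, ∑ a, ∑ s, q2 (a, s, ys) = if PY ys = 0 then 0 else PY ys := by
        intro ys
        by_cases h : PY ys = 0
        · simp [hq2def, h]
        · rw [if_neg h]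
          have : ∀ a s, q2 (a, s, ys) = PAY (a, ys) * PSY (s, ys) / PY ys := by
            intro a s
            rw [hq2def]
            dsimp only
            rw [if_neg h]
            ring
          rw [Finset.sum_congr rfl (fun a _ => Finset.sum_congr rfl (fun s _ => this a s))]
          have inner : ∀ a : Msp, ∑ s, PAY (a, ys) * PSY (s, ys) / PY ys
              = PAY (a, ys) * PY ys / PY ys := by
            intro a
            rw [← Finset.sum_div, ← Finset.mul_sum]
          rw [Finset.sum_congr rfl (fun a _ => inner a)]
          have : ∀ a : Msp, PAY (a, ys) * PY ys / PY ys = PAY (a, ys) := by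
            intro a; field_simp
          rw [Finset.sum_congr rfl (fun a _ => this a), haay]
      rw [e1, Finset.sum_congr rfl (fun ys _ => e2 ys)]
      calc ∑ ys, (if PY ys = 0 then 0 else PY ys) ≤ ∑ ys, PY ys :=
            Finset.sum_le_sum (fun ys _ => by split <;> [exact hPY0 ys; exact le_rfl])
        _ = 1 := hPY1
    have habs2 : ∀ z, q2 z = 0 → Pfull z = 0 := by
      intro z hz
      rw [hq2def] at hz
      dsimp only at hz
      by_cases h : PY z.2.2 = 0
      · have h1 := hPfull_le_PSY z
        have h2 := hPSY_le_PY z.2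
        rw [h] at h2
        exact le_antisymm (le_trans h1 h2) (hP0 z)
      · rw [if_neg h] at hz
        rcases div_eq_zero_iff.mp hz with h' | h'
        · rcases mul_eq_zero.mp h' with h'' | h''
          · have := hPfull_le_PSY z
            rw [h''] at this
            exact le_antisymm this (hP0 z)
          · have := hPfull_le_PAY z
            rw [h''] at this
            exact le_antisymm this (hP0 z)
        · exact absurd h' h
    have hgibbs2 := gibbs (P := Pfull) (q := q2) hP0 hq20 hPfull1 hq2sum habs2
    have key2 : ∀ z, Pfull z * Real.log (q2 z)
        = Pfull z * Real.log (PSY z.2) + Pfull z * Real.log (PAY (z.1, z.2.2))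
          - Pfull z * Real.log (PY z.2.2) := by
      intro z
      rcases eq_or_lt_of_le (hP0 z) with h | h
      · rw [← h]; ring
      · have h1 : 0 < PSY z.2 := lt_of_lt_of_le h (hPfull_le_PSY z)
        have h2 : 0 < PAY (z.1, z.2.2) := lt_of_lt_of_le h (hPfull_le_PAY z)
        have h3 : 0 < PY z.2.2 := lt_of_lt_of_le h1 (hPSY_le_PY z.2)
        rw [hq2def]
        dsimp only
        rw [if_neg h3.ne', Real.log_div (by positivity) h3.ne', Real.log_mul h1.ne' h2.ne']
        ring
    have S1 : ∑ z : Msp × Msp × (Fin n → Y), Pfull z * Real.log (PSY z.2) = nE PSY := by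
      rw [Fintype.sum_prod_type, Finset.sum_comm, nE]
      refine Finset.sum_congr rfl (fun w _ => ?_)
      dsimp only
      rw [← Finset.sum_mul]
    have S2 : ∑ z : Msp × Msp × (Fin n → Y), Pfull z * Real.log (PAY (z.1, z.2.2))
        = nE PAY := by
      rw [Fintype.sum_prod_type, nE, Fintype.sum_prod_type]
      refine Finset.sum_congr rfl (fun a _ => ?_)
      rw [Fintype.sum_prod_type, Finset.sum_comm]
      refine Finset.sum_congr rfl (fun ys _ => ?_)
      dsimp only
      rw [← Finset.sum_mul]
    have S3 : ∑ z : Msp × Msp × (Fin n → Y), Pfull z * Real.log (PY z.2.2) = nE PY := by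
      rw [Fintype.sum_prod_type]
      have e : ∀ a, ∑ w : Msp × (Fin n → Y), Pfull (a, w) * Real.log (PY w.2)
          = ∑ ys, PAY (a, ys) * Real.log (PY ys) := by
        intro a
        rw [Fintype.sum_prod_type, Finset.sum_comm]
        refine Finset.sum_congr rfl (fun ys _ => ?_)
        dsimp only
        rw [← Finset.sum_mul]
        try rfl
      rw [Finset.sum_congr rfl (fun a _ => e a), Finset.sum_comm, nE]
      refine Finset.sum_congr rfl (fun ys _ => ?_)
      rw [← Finset.sum_mul, haay]
    have cross2 : ∑ z : Msp × Msp × (Fin n → Y), Pfull z * Real.log (q2 z)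
        = nE PSY + nE PAY - nE PY := by
      rw [Finset.sum_congr rfl (fun z _ => key2 z), Finset.sum_sub_distrib,
        Finset.sum_add_distrib, S1, S2, S3]
    rw [cross2] at hgibbs2
    exact hgibbs2
  -- conditioning decomposition + single letter
  have cond : Real.log (Fintype.card Msp) + nE Pfull - nE PAY ≤ (n : ℝ) * C' := by
    have hnEPfull : nE Pfull = -Real.log (Fintype.card Msp)
        + c * ∑ a, ∑ w : Msp × (Fin n → Y), J a w * Real.log (J a w) := by
      have e : nE Pfull = ∑ a, ∑ w : Msp × (Fin n → Y), (c * J a w) * Real.log (c * J a w) := by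
        rw [nE, Fintype.sum_prod_type]
      rw [e, nE_scale J hJ0 hJ1 hc.le]
      have h1 : (Fintype.card Msp : ℝ) * (c * Real.log c) = -Real.log (Fintype.card Msp) := by
        rw [← mul_assoc, hcard1, one_mul, hcdef, Real.log_inv]
      rw [h1]
      rfl
    have hnEPAY : nE PAY = -Real.log (Fintype.card Msp) + c * ∑ a, nE (R a) := by
      have e : nE PAY = ∑ a, ∑ ys, (c * R a ys) * Real.log (c * R a ys) := by
        rw [nE, Fintype.sum_prod_type]
        refine Finset.sum_congr rfl (fun a _ => Finset.sum_congr rfl (fun ys _ => ?_))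
        rw [hPAYJ (a, ys)]
      rw [e, nE_scale R hR0 hR1 hc.le]
      have h1 : (Fintype.card Msp : ℝ) * (c * Real.log c) = -Real.log (Fintype.card Msp) := by
        rw [← mul_assoc, hcard1, one_mul, hcdef, Real.log_inv]
      rw [h1]
    have perA : ∀ a : Msp, Real.log (Fintype.card Msp)
        + (∑ w : Msp × (Fin n → Y), J a w * Real.log (J a w)) - nE (R a) ≤ (n : ℝ) * C' := by
      intro a
      have hsl := single_letter (M := Msp) (B := XB) (Y' := Y)
        (fun i b y => W (eA a i) b y) (fun i b y => hW _ _ _) (fun i b => hW1 _ _)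
        (fun m => eB (m - a)) C' (fun i PB h0 h1 => hC' (eA a i) PB h0 h1)
      have e1 : ∑ m, ∑ ys : Fin n → Y, ((Fintype.card Msp : ℝ)⁻¹
            * ∏ i, W (eA a i) (eB (m - a) i) (ys i))
            * Real.log ((Fintype.card Msp : ℝ)⁻¹ * ∏ i, W (eA a i) (eB (m - a) i) (ys i))
          = ∑ w : Msp × (Fin n → Y), J a w * Real.log (J a w) := by
        rw [Fintype.sum_prod_type]
      have e2 : nE (fun ys : Fin n → Y => ∑ m, (Fintype.card Msp : ℝ)⁻¹
            * ∏ i, W (eA a i) (eB (m - a) i) (ys i)) = nE (R a) := by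
        rfl
      rw [e1, e2] at hsl
      exact hsl
    have sumA := Finset.sum_le_sum (s := (Finset.univ : Finset Msp)) (fun a _ => perA a)
    rw [Finset.sum_sub_distrib, Finset.sum_add_distrib, Finset.sum_const,
      Finset.card_univ, nsmul_eq_mul] at sumA
    rw [Finset.sum_const, Finset.card_univ, nsmul_eq_mul] at sumA
    -- multiply by c
    have hmul := mul_le_mul_of_nonneg_left sumA hc.le
    rw [hnEPfull, hnEPAY]
    have expand : Real.log (Fintype.card Msp) + (-Real.log (Fintype.card Msp)
          + c * ∑ a, ∑ w : Msp × (Fin n → Y), J a w * Real.log (J a w))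
        - (-Real.log (Fintype.card Msp) + c * ∑ a, nE (R a))
        = c * ((Fintype.card Msp : ℝ) * Real.log (Fintype.card Msp)
          + ∑ a, ∑ w : Msp × (Fin n → Y), J a w * Real.log (J a w)
          - ∑ a, nE (R a)) := by
      linear_combination (-Real.log (Fintype.card Msp : ℝ)) * hcard1
    rw [expand]
    calc c * ((Fintype.card Msp : ℝ) * Real.log (Fintype.card Msp)
          + ∑ a, ∑ w : Msp × (Fin n → Y), J a w * Real.log (J a w) - ∑ a, nE (R a))
        ≤ c * ((Fintype.card Msp : ℝ) * ((n : ℝ) * C')) := mul_le_mul_of_nonneg_left sumA hc.le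
      _ = (n : ℝ) * C' := by
          rw [← mul_assoc, mul_comm c, hcard1, one_mul]
  nlinarith [fano, submod, cond, hε0, hcardM]

end PerN

/-- Converse via Fano: for any sequence of codes computing `M_A ⊕ M_B` over a
memoryless classical MAC `W(y|x_A,x_B)`, with independent uniform messages on
`𝔽_p^{ℓ(n)}` of size at least `2^{nR}` and vanishing error probability, the rate
satisfies `R ≤ max_{P_B, a} I(B; Y | A = a)`. -/
theorem comp_converse {XA XB Y : Type*} [Fintype XA] [Fintype XB] [Fintype Y]
    [DecidableEq Y]
    (W : XA → XB → Y → ℝ)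
    (hW : ∀ a b y, 0 ≤ W a b y) (hW1 : ∀ a b, ∑ y, W a b y = 1)
    (p : ℕ) [Fact (Nat.Prime p)] (R : ℝ) (hR : 0 < R)
    (ℓ : ℕ → ℕ)
    (encA : ∀ n : ℕ, (Fin (ℓ n) → ZMod p) → Fin n → XA)
    (encB : ∀ n : ℕ, (Fin (ℓ n) → ZMod p) → Fin n → XB)
    (dec : ∀ n : ℕ, (Fin n → Y) → (Fin (ℓ n) → ZMod p))
    (hsize : ∀ n : ℕ, (2 : ℝ) ^ ((n : ℝ) * R) ≤ (p : ℝ) ^ (ℓ n))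
    (herr : Filter.Tendsto (fun n : ℕ =>
        ∑ mA : Fin (ℓ n) → ZMod p, ∑ mB : Fin (ℓ n) → ZMod p, ∑ ys : Fin n → Y,
          ((p : ℝ) ^ ℓ n)⁻¹ * ((p : ℝ) ^ ℓ n)⁻¹
            * (∏ i, W (encA n mA i) (encB n mB i) (ys i))
            * (if dec n ys = mA + mB then 0 else 1))
      Filter.atTop (nhds 0)) :
    R ≤ sSup {x : ℝ | ∃ (PB : XB → ℝ) (a : XA),
        (∀ b, 0 ≤ PB b) ∧ (∑ b, PB b = 1)
        ∧ x = mutInfo (fun (b : XB) (y : Y) => PB b * W a b y)} := by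
  classical
  haveI : NeZero p := ⟨(‹Fact p.Prime›.out).pos.ne'⟩
  set S : Set ℝ := {x : ℝ | ∃ (PB : XB → ℝ) (a : XA),
      (∀ b, 0 ≤ PB b) ∧ (∑ b, PB b = 1)
      ∧ x = mutInfo (fun (b : XB) (y : Y) => PB b * W a b y)} with hSdef
  set C : ℝ := sSup S with hCdef
  have hlog2 : (0:ℝ) < Real.log 2 := Real.log_pos one_lt_two
  -- S is bounded above
  have hbdd : BddAbove S := by
    refine ⟨Real.log (Fintype.card XB) / Real.log 2, fun x hx => ?_⟩
    obtain ⟨PB, a, hPB0, hPB1, hxeq⟩ := hx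
    have hsum : ∑ b, ∑ y, PB b * W a b y = 1 := by
      have : ∀ b, ∑ y, PB b * W a b y = PB b := by
        intro b; rw [← Finset.mul_sum, hW1, mul_one]
      rw [Finset.sum_congr rfl (fun b _ => this b), hPB1]
    have := mutInfo_le_card (fun b y => PB b * W a b y)
      (fun b y => mul_nonneg (hPB0 b) (hW _ _ _)) hsum
    rw [hxeq, le_div_iff₀ hlog2, mul_comm]
    exact this
  -- the per-letter bound
  have hC' : ∀ (a : XA) (PB : XB → ℝ), (∀ b, 0 ≤ PB b) → (∑ b, PB b = 1) →
      Real.log 2 * mutInfo (fun b y => PB b * W a b y) ≤ Real.log 2 * C := by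
    intro a PB h0 h1
    refine mul_le_mul_of_nonneg_left ?_ hlog2.le
    exact le_csSup hbdd ⟨PB, a, h0, h1, rfl⟩
  -- error sequence
  set E : ℕ → ℝ := fun n =>
      ∑ mA : Fin (ℓ n) → ZMod p, ∑ mB : Fin (ℓ n) → ZMod p, ∑ ys : Fin n → Y,
        ((p : ℝ) ^ ℓ n)⁻¹ * ((p : ℝ) ^ ℓ n)⁻¹
          * (∏ i, W (encA n mA i) (encB n mB i) (ys i))
          * (if dec n ys = mA + mB then 0 else 1) with hEdef
  have hppos : (0:ℝ) < (p:ℝ) := by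
    have := (‹Fact p.Prime›.out).pos
    positivity
  -- the key eventual inequality
  have key : ∀ n : ℕ, 1 ≤ n → E n < 1 → (1 - E n) * R ≤ 1 / n + C := by
    intro n hn hE1
    haveI : Nonempty (Fin (ℓ n) → ZMod p) := ⟨fun _ => 0⟩
    have hcard : (Fintype.card (Fin (ℓ n) → ZMod p) : ℝ) = (p:ℝ) ^ (ℓ n) := by
      rw [Fintype.card_fun, ZMod.card, Fintype.card_fin]
      push_cast
      ring
    have hεdef : E n = ∑ a : Fin (ℓ n) → ZMod p, ∑ s : Fin (ℓ n) → ZMod p,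
        ∑ ys : Fin n → Y,
        ((Fintype.card (Fin (ℓ n) → ZMod p) : ℝ)⁻¹
          * ((Fintype.card (Fin (ℓ n) → ZMod p) : ℝ)⁻¹
            * ∏ i, W (encA n a i) (encB n (s - a) i) (ys i)))
          * (if dec n ys = s then 0 else 1) := by
      rw [hEdef]
      refine Finset.sum_congr rfl (fun a _ => ?_)
      rw [← Fintype.sum_equiv (Equiv.subRight a)
        (fun s => ∑ ys : Fin n → Y,
          ((Fintype.card (Fin (ℓ n) → ZMod p) : ℝ)⁻¹
            * ((Fintype.card (Fin (ℓ n) → ZMod p) : ℝ)⁻¹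
              * ∏ i, W (encA n a i) (encB n (s - a) i) (ys i)))
            * (if dec n ys = s then 0 else 1))
        (fun mB => ∑ ys : Fin n → Y,
          ((p : ℝ) ^ ℓ n)⁻¹ * ((p : ℝ) ^ ℓ n)⁻¹
            * (∏ i, W (encA n a i) (encB n mB i) (ys i))
            * (if dec n ys = a + mB then 0 else 1))
        (fun x => ?_)]
      refine Finset.sum_congr rfl (fun ys _ => ?_)
      simp only [Equiv.subRight_apply]
      try rw [hcard]
      have hx : a + (x - a) = x := by abel
      simp only [hx]
      ring
    have hper := per_n (Msp := Fin (ℓ n) → ZMod p) W hW hW1 (encA n) (encB n) (dec n)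
      (Real.log 2 * C) hC' (E n) hεdef hE1
    rw [hcard] at hper
    -- size bound
    have hnR : (n:ℝ) * R * Real.log 2 ≤ Real.log ((p:ℝ) ^ (ℓ n)) := by
      have h1 := Real.log_le_log (by positivity) (hsize n)
      rw [Real.log_rpow (by norm_num)] at h1
      linarith
    have hE0 : 0 ≤ E n := by
      rw [hEdef]
      refine Finset.sum_nonneg (fun mA _ => Finset.sum_nonneg (fun mB _ =>
        Finset.sum_nonneg (fun ys _ => ?_)))
      have h1 : (0:ℝ) ≤ ∏ i, W (encA n mA i) (encB n mB i) (ys i) :=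
        Finset.prod_nonneg (fun i _ => hW _ _ _)
      have h2 : (0:ℝ) ≤ (if dec n ys = mA + mB then (0:ℝ) else 1) := by split <;> norm_num
      positivity
    have hnpos : (0:ℝ) < (n:ℝ) := by exact_mod_cast hn
    have chain : ((1 - E n) * R) * ((n:ℝ) * Real.log 2)
        ≤ (1 / (n:ℝ) + C) * ((n:ℝ) * Real.log 2) := by
      calc ((1 - E n) * R) * ((n:ℝ) * Real.log 2)
          = (1 - E n) * ((n:ℝ) * R * Real.log 2) := by ring
        _ ≤ (1 - E n) * Real.log ((p:ℝ) ^ (ℓ n)) :=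
            mul_le_mul_of_nonneg_left hnR (by linarith)
        _ ≤ Real.log 2 + (n:ℝ) * (Real.log 2 * C) := hper
        _ = (1 / (n:ℝ) + C) * ((n:ℝ) * Real.log 2) := by
            field_simp
    have hpos : (0:ℝ) < (n:ℝ) * Real.log 2 := by positivity
    exact le_of_mul_le_mul_right chain hpos
  -- take limits
  have hev : ∀ᶠ n : ℕ in Filter.atTop, (1 - E n) * R ≤ 1 / n + C := by
    have h1 : ∀ᶠ n : ℕ in Filter.atTop, E n < 1 :=
      herr.eventually_lt_const (by norm_num : (0:ℝ) < 1)
    have h2 : ∀ᶠ n : ℕ in Filter.atTop, 1 ≤ n := Filter.eventually_ge_atTop 1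
    filter_upwards [h1, h2] with n hn1 hn2
    exact key n hn2 hn1
  have hlim1 : Filter.Tendsto (fun n : ℕ => (1 - E n) * R) Filter.atTop (nhds R) := by
    have : Filter.Tendsto (fun n : ℕ => 1 - E n) Filter.atTop (nhds 1) := by
      have := Filter.Tendsto.const_sub (1:ℝ) herr
      simpa using this
    have h2 := this.mul_const R
    simpa using h2
  have hlim2 : Filter.Tendsto (fun n : ℕ => 1 / (n:ℝ) + C) Filter.atTop (nhds C) := by
    have := (tendsto_one_div_atTop_nhds_zero_nat).add_const C
    simpa using this
  exact le_of_tendsto_of_tendsto hlim1 hlim2 hev
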